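/- Let f : [0,1] → ℝ be a C² function with f'(0) = 0, f''(z) > 0 for all z ∈ [0,1], and ∫₀¹ f(z) dz = 0. Then ∫₀¹ f(z)² dz ≤ (1/3) f(1)². -/

import Mathlib

open Set intervalIntegral

/-- If `f` is C² on `[0,1]` with `f'(0) = 0`, `f'' > 0` on `[0,1]`,
and `∫₀¹ f = 0`, then `∫₀¹ f² ≤ (1/3) f(1)²`. -/
theorem convex_lemma_inequality
    (f f' f'' : ℝ → ℝ)
    (hf' : ∀ z ∈ Set.Icc (0:ℝ) 1, HasDerivWithinAt f (f' z) (Set.Icc 0 1) z)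
    (hf'' : ∀ z ∈ Set.Icc (0:ℝ) 1, HasDerivWithinAt f' (f'' z) (Set.Icc 0 1) z)
    (hcont : ContinuousOn f'' (Set.Icc 0 1))
    (h0 : f' 0 = 0)
    (hpos : ∀ z ∈ Set.Icc (0:ℝ) 1, 0 < f'' z)
    (hint : ∫ z in (0:ℝ)..1, f z = 0) :
    ∫ z in (0:ℝ)..1, (f z) ^ 2 ≤ (1/3) * (f 1) ^ 2 := by
  have h01 : (0:ℝ) ≤ 1 := zero_le_one
  have hmem0 : (0:ℝ) ∈ Set.Icc (0:ℝ) 1 := ⟨le_refl 0, h01⟩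
  have hmem1 : (1:ℝ) ∈ Set.Icc (0:ℝ) 1 := ⟨h01, le_refl 1⟩
  have hIoo : interior (Set.Icc (0:ℝ) 1) = Set.Ioo 0 1 := interior_Icc
  have hsub : Set.Ioo (0:ℝ) 1 ⊆ Set.Icc 0 1 := Set.Ioo_subset_Icc_self
  -- continuity
  have hfc : ContinuousOn f (Set.Icc 0 1) := fun x hx => (hf' x hx).continuousWithinAt
  have hf'c : ContinuousOn f' (Set.Icc 0 1) := fun x hx => (hf'' x hx).continuousWithinAt
  -- f' is monotone, hence nonneg
  have hmonf' : MonotoneOn f' (Set.Icc (0:ℝ) 1) := by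
    apply monotoneOn_of_hasDerivWithinAt_nonneg (convex_Icc 0 1) hf'c
    · intro x hx
      rw [hIoo] at hx ⊢
      exact (hf'' x (hsub hx)).mono hsub
    · intro x hx
      rw [hIoo] at hx
      exact (hpos x (hsub hx)).le
  have hf'nn : ∀ x ∈ Set.Icc (0:ℝ) 1, 0 ≤ f' x := by
    intro x hx
    have := hmonf' hmem0 hx hx.1
    rwa [h0] at this
  -- f is monotone
  have hmonf : MonotoneOn f (Set.Icc (0:ℝ) 1) := by
    apply monotoneOn_of_hasDerivWithinAt_nonneg (convex_Icc 0 1) hfc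
    · intro x hx
      rw [hIoo] at hx ⊢
      exact (hf' x (hsub hx)).mono hsub
    · intro x hx
      rw [hIoo] at hx
      exact hf'nn x (hsub hx)
  have hfle : ∀ x ∈ Set.Icc (0:ℝ) 1, f x ≤ f 1 := fun x hx => hmonf hx hmem1 hx.2
  set c : ℝ := f 1 with hc
  -- c ≥ 0
  have hfint : IntervalIntegrable f MeasureTheory.volume 0 1 := by
    apply ContinuousOn.intervalIntegrable
    rwa [Set.uIcc_of_le h01]
  have hcnn : (0:ℝ) ≤ c := by
    have : (∫ z in (0:ℝ)..1, f z) ≤ ∫ _z in (0:ℝ)..1, c := by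
      apply intervalIntegral.integral_mono_on h01 hfint intervalIntegrable_const
      exact hfle
    rw [hint, intervalIntegral.integral_const] at this
    simpa using this
  -- auxiliary functions
  set w : ℝ → ℝ := fun t => 2*c*t - f t - c with hw
  set g : ℝ → ℝ := fun t => 3*c - f t - 2*c*t with hg
  have hwc : ContinuousOn w (Set.Icc 0 1) := by
    apply ContinuousOn.sub _ continuousOn_const
    exact (continuousOn_const.mul continuousOn_id).sub hfc
  have hgc : ContinuousOn g (Set.Icc 0 1) := by
    apply ContinuousOn.sub _ (continuousOn_const.mul continuousOn_id)
    exact continuousOn_const.sub hfc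
  -- w is concave
  have hwconc : ConcaveOn ℝ (Set.Icc (0:ℝ) 1) w := by
    apply concaveOn_of_hasDerivWithinAt2_nonpos (convex_Icc 0 1)
      (f' := fun x => 2*c - f' x) (f'' := fun x => -f'' x) hwc
    · intro x hx
      rw [hIoo] at hx ⊢
      have h1 : HasDerivWithinAt (fun t : ℝ => 2*c*t) (2*c) (Set.Ioo 0 1) x := by
        simpa using (hasDerivWithinAt_id x (Set.Ioo (0:ℝ) 1)).const_mul (2*c)
      exact (h1.sub ((hf' x (hsub hx)).mono hsub)).sub_const c
    · intro x hx
      rw [hIoo] at hx ⊢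
      have := ((hf'' x (hsub hx)).mono hsub).const_sub (2*c)
      simpa using this
    · intro x hx
      rw [hIoo] at hx
      simpa using (hpos x (hsub hx)).le
  -- g is antitone
  have hganti : AntitoneOn g (Set.Icc (0:ℝ) 1) := by
    apply antitoneOn_of_hasDerivWithinAt_nonpos (convex_Icc 0 1) hgc
      (f' := fun x => -f' x - 2*c)
    · intro x hx
      rw [hIoo] at hx ⊢
      have h1 : HasDerivWithinAt (fun t : ℝ => 3*c - f t) (-f' x) (Set.Ioo 0 1) x := by
        simpa using ((hf' x (hsub hx)).mono hsub).const_sub (3*c)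
      have h2 : HasDerivWithinAt (fun t : ℝ => 2*c*t) (2*c) (Set.Ioo 0 1) x := by
        simpa using (hasDerivWithinAt_id x (Set.Ioo (0:ℝ) 1)).const_mul (2*c)
      exact h1.sub h2
    · intro x hx
      rw [hIoo] at hx
      have := hf'nn x (hsub hx)
      nlinarith
  have hw1 : w 1 = 0 := by simp [hw]; ring
  -- the crossing point
  set S : Set ℝ := {x | x ∈ Set.Icc (0:ℝ) 1 ∧ 0 ≤ w x} with hS
  have hSne : S.Nonempty := ⟨1, hmem1, le_of_eq hw1.symm⟩
  have hSbdd : BddBelow S := ⟨0, fun x hx => hx.1.1⟩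
  have hSclosed : IsClosed S := by
    have : S = Set.Icc (0:ℝ) 1 ∩ w ⁻¹' (Set.Ici 0) := by
      ext x; simp [hS, Set.mem_Ici, and_comm]
    rw [this]
    exact hwc.preimage_isClosed_of_isClosed isClosed_Icc isClosed_Ici
  set a : ℝ := sInf S with ha
  have haS : a ∈ S := hSclosed.csInf_mem hSne hSbdd
  have haI : a ∈ Set.Icc (0:ℝ) 1 := haS.1
  have hwa : 0 ≤ w a := haS.2
  -- w ≥ 0 on [a, 1]
  have hwnn : ∀ t ∈ Set.Icc (0:ℝ) 1, a ≤ t → 0 ≤ w t := by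
    intro t ht hat
    rcases eq_or_lt_of_le haI.2 with h1 | h1
    · have : t = 1 := le_antisymm ht.2 (h1 ▸ hat)
      rw [this, hw1]
    · set θ : ℝ := (1 - t) / (1 - a) with hθ
      set μ : ℝ := (t - a) / (1 - a) with hμ
      have hden : (0:ℝ) < 1 - a := by linarith
      have hθnn : 0 ≤ θ := div_nonneg (by linarith [ht.2]) hden.le
      have hμnn : 0 ≤ μ := div_nonneg (by linarith) hden.le
      have hsum : θ + μ = 1 := by
        rw [hθ, hμ, ← add_div, div_eq_one_iff_eq hden.ne']
        ring
      have hcomb := hwconc.2 haI hmem1 hθnn hμnn hsum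
      try simp only [smul_eq_mul] at hcomb
      have hpt : θ * a + μ * 1 = t := by
        rw [hθ, hμ]
        field_simp
        ring
      rw [hpt] at hcomb
      calc (0:ℝ) ≤ θ * w a + μ * w 1 := by
            rw [hw1]; positivity
        _ ≤ w t := hcomb
  -- w < 0 before a
  have hwneg : ∀ t ∈ Set.Icc (0:ℝ) 1, t < a → w t ≤ 0 := by
    intro t ht hta
    by_contra hcon
    push_neg at hcon
    have : t ∈ S := ⟨ht, hcon.le⟩
    exact absurd (csInf_le hSbdd this) (not_le.mpr hta)
  -- pointwise inequality
  have hpw : ∀ t ∈ Set.Icc (0:ℝ) 1, w t * g t ≤ w t * g a := by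
    intro t ht
    rcases le_or_gt a t with h | h
    · have h1 : 0 ≤ w t := hwnn t ht h
      have h2 : g t ≤ g a := hganti haI ht h
      exact mul_le_mul_of_nonneg_left h2 h1
    · have h1 : w t ≤ 0 := hwneg t ht h
      have h2 : g a ≤ g t := hganti ht haI h.le
      exact mul_le_mul_of_nonpos_left h2 h1
  -- integrability
  have hwint : IntervalIntegrable w MeasureTheory.volume 0 1 := by
    apply ContinuousOn.intervalIntegrable; rwa [Set.uIcc_of_le h01]
  have hwgint : IntervalIntegrable (fun t => w t * g t) MeasureTheory.volume 0 1 := by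
    apply ContinuousOn.intervalIntegrable
    rw [Set.uIcc_of_le h01]
    exact hwc.mul hgc
  -- ∫ w = 0
  have hlin : IntervalIntegrable (fun t : ℝ => 2*c*t) MeasureTheory.volume 0 1 := by
    apply Continuous.intervalIntegrable; fun_prop
  have hintw : (∫ t in (0:ℝ)..1, w t) = 0 := by
    have e : ∀ t ∈ Set.uIcc (0:ℝ) 1, w t = (2*c*t - c) - f t := by
      intro t _; simp only [hw]; ring
    rw [intervalIntegral.integral_congr e,
      intervalIntegral.integral_sub (hlin.sub intervalIntegrable_const) hfint, hint,
      intervalIntegral.integral_sub hlin intervalIntegrable_const,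
      intervalIntegral.integral_const_mul, integral_id, intervalIntegral.integral_const]
    simp only [smul_eq_mul]
    ring
  -- key inequality : ∫ w g ≤ 0
  have hkey : (∫ t in (0:ℝ)..1, w t * g t) ≤ 0 := by
    have h1 : (∫ t in (0:ℝ)..1, w t * g t) ≤ ∫ t in (0:ℝ)..1, w t * g a := by
      apply intervalIntegral.integral_mono_on h01 hwgint (hwint.mul_const _) hpw
    have h2 : (∫ t in (0:ℝ)..1, w t * g a) = 0 := by
      rw [intervalIntegral.integral_mul_const, hintw, zero_mul]
    linarith
  -- expand w g
  have hexp : (∫ t in (0:ℝ)..1, w t * g t)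
      = (∫ t in (0:ℝ)..1, (f t)^2) - 2*c*(∫ t in (0:ℝ)..1, f t)
        + ((∫ t in (0:ℝ)..1, (c^2 : ℝ)) - 4*c^2*(∫ t in (0:ℝ)..1, t^2)) := by
    have hsqint : IntervalIntegrable (fun t => (f t)^2) MeasureTheory.volume 0 1 := by
      apply ContinuousOn.intervalIntegrable
      rw [Set.uIcc_of_le h01]
      exact hfc.pow 2
    have heq : ∀ t : ℝ, w t * g t
        = ((f t)^2 - 2*c*(f t)) + (c^2 - 4*c^2*t^2 - (4*c^2 - 8*c^2*t)) := by
      intro t; simp only [hw, hg]; ring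
    rw [intervalIntegral.integral_congr (g := fun t =>
      ((f t)^2 - 2*c*(f t)) + (c^2 - 4*c^2*t^2 - (4*c^2 - 8*c^2*t))) (fun t _ => heq t)]
    have hi1 : IntervalIntegrable (fun t => (f t)^2 - 2*c*(f t)) MeasureTheory.volume 0 1 :=
      hsqint.sub (hfint.const_mul _)
    have hi2 : IntervalIntegrable (fun t : ℝ => c^2 - 4*c^2*t^2) MeasureTheory.volume 0 1 := by
      apply Continuous.intervalIntegrable; fun_prop
    have hi3 : IntervalIntegrable (fun t : ℝ => 4*c^2 - 8*c^2*t) MeasureTheory.volume 0 1 := by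
      apply Continuous.intervalIntegrable; fun_prop
    rw [intervalIntegral.integral_add hi1 (hi2.sub hi3),
      intervalIntegral.integral_sub hsqint (hfint.const_mul _),
      intervalIntegral.integral_sub hi2 hi3,
      intervalIntegral.integral_const_mul]
    have h4 : (∫ t in (0:ℝ)..1, (c^2 - 4*c^2*t^2)) =
        (∫ t in (0:ℝ)..1, (c^2:ℝ)) - 4*c^2*(∫ t in (0:ℝ)..1, t^2) := by
      rw [← intervalIntegral.integral_const_mul, intervalIntegral.integral_sub]
      · exact intervalIntegrable_const
      · apply Continuous.intervalIntegrable; fun_prop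
    have h5 : (∫ t in (0:ℝ)..1, (4*c^2 - 8*c^2*t)) = 0 := by
      rw [intervalIntegral.integral_sub intervalIntegrable_const]
      · rw [intervalIntegral.integral_const, intervalIntegral.integral_const_mul, integral_id]
        simp only [smul_eq_mul]
        ring
      · apply Continuous.intervalIntegrable; fun_prop
    rw [h4, h5]
    ring
  rw [hexp, hint] at hkey
  rw [intervalIntegral.integral_const, integral_pow] at hkey
  simp only [smul_eq_mul] at hkey
  nlinarith [hkey]
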